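/- Let (m₁,m₂,m₃,ξ,p) be a collision solution of the reduced two-body system on [t₀, t*) with t* < ∞ and ξ(t) → +∞ as t → t*⁻. Then p admits the asymptotic expansion p = m₁/2 − √ξ·(1 + O(1/ξ)): there exist M > 0 and t₁ ∈ [t₀, t*) such that |p(t) − m₁(t)/2 + √(ξ(t))| · √(ξ(t)) ≤ M for all t ∈ [t₁, t*). -/

import Mathlib

open Filter Set

/-- If `f` has nonneg derivative on `[a,b]`, then `f a ≤ f b`. -/
lemma mono_of_deriv_aux {f f' : ℝ → ℝ} {a b : ℝ} (hab : a ≤ b)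
    (hd : ∀ t ∈ Icc a b, HasDerivAt f (f' t) t)
    (h0 : ∀ t ∈ Icc a b, 0 ≤ f' t) : f a ≤ f b := by
  have hmono := monotoneOn_of_deriv_nonneg (convex_Icc a b)
    (fun t ht => (hd t ht).continuousAt.continuousWithinAt)
    (fun t ht => (hd t (interior_subset ht)).differentiableAt.differentiableWithinAt)
    (fun t ht => by
      rw [(hd t (interior_subset ht)).deriv]; exact h0 t (interior_subset ht))
  exact hmono (left_mem_Icc.2 hab) (right_mem_Icc.2 hab) hab

lemma anti_of_deriv_aux {f f' : ℝ → ℝ} {a b : ℝ} (hab : a ≤ b)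
    (hd : ∀ t ∈ Icc a b, HasDerivAt f (f' t) t)
    (h0 : ∀ t ∈ Icc a b, f' t ≤ 0) : f b ≤ f a := by
  have := mono_of_deriv_aux (f := fun t => -f t) (f' := fun t => -f' t) hab
    (fun t ht => (hd t ht).neg) (fun t ht => by simpa using h0 t ht)
  simpa using this

lemma const_of_deriv_aux {f f' : ℝ → ℝ} {a b : ℝ} (hab : a ≤ b)
    (hd : ∀ t ∈ Icc a b, HasDerivAt f (f' t) t)
    (h0 : ∀ t ∈ Icc a b, f' t = 0) : f b = f a :=
  le_antisymm (anti_of_deriv_aux hab hd (fun t ht => le_of_eq (h0 t ht)))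
    (mono_of_deriv_aux hab hd (fun t ht => ge_of_eq (h0 t ht)))

/-- Viability: if `f a ≤ c` and the derivative is negative whenever `f = c`,
then `f ≤ c` on `[a,b]`. -/
lemma stay_le_aux {f f' : ℝ → ℝ} {a b c : ℝ}
    (hd : ∀ t ∈ Icc a b, HasDerivAt f (f' t) t)
    (hneg : ∀ t ∈ Icc a b, f t = c → f' t < 0)
    (ha : f a ≤ c) : ∀ t ∈ Icc a b, f t ≤ c := by
  by_contra hcon
  push_neg at hcon
  obtain ⟨t3, ht3, hft3⟩ := hcon
  have hcont : ContinuousOn f (Icc a t3) := fun t ht =>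
    (hd t ⟨ht.1, le_trans ht.2 ht3.2⟩).continuousAt.continuousWithinAt
  have hSclosed : IsClosed (Icc a t3 ∩ f ⁻¹' (Iic c)) :=
    hcont.preimage_isClosed_of_isClosed isClosed_Icc isClosed_Iic
  have hSne : (Icc a t3 ∩ f ⁻¹' (Iic c)).Nonempty := ⟨a, ⟨le_refl a, ht3.1⟩, ha⟩
  have hSbdd : BddAbove (Icc a t3 ∩ f ⁻¹' (Iic c)) :=
    (bddAbove_Icc).mono (inter_subset_left)
  set u := sSup (Icc a t3 ∩ f ⁻¹' (Iic c)) with hu_def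
  have huS : u ∈ Icc a t3 ∩ f ⁻¹' (Iic c) := hSclosed.csSup_mem hSne hSbdd
  obtain ⟨⟨hau, hut3⟩, hfu_le⟩ := huS
  have hu_lt : u < t3 := lt_of_le_of_ne hut3 (by
    intro h; rw [h] at hfu_le; exact absurd hfu_le (not_le.2 hft3))
  have hgt : ∀ t, u < t → t ≤ t3 → c < f t := by
    intro t hut htt3
    by_contra hle
    push_neg at hle
    exact absurd (le_csSup hSbdd ⟨⟨le_trans hau hut.le, htt3⟩, hle⟩) (not_le.2 hut)
  have huI : u ∈ Icc a b := ⟨hau, le_trans hut3 ht3.2⟩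
  have hfu_ge : c ≤ f u := by
    have htend : Tendsto f (nhdsWithin u (Ioi u)) (nhds (f u)) :=
      ((hd u huI).continuousAt.tendsto).mono_left nhdsWithin_le_nhds
    refine ge_of_tendsto htend ?_
    filter_upwards [Ioo_mem_nhdsGT hu_lt] with t ht
    exact (hgt t ht.1 ht.2.le).le
  have hfu : f u = c := le_antisymm hfu_le hfu_ge
  have hderneg := hneg u huI hfu
  have hslope : Tendsto (slope f u) (nhdsWithin u {u}ᶜ) (nhds (f' u)) :=
    hasDerivAt_iff_tendsto_slope.1 (hd u huI)
  have hge : (0:ℝ) ≤ f' u := by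
    have hsub : Ioi u ⊆ {u}ᶜ := fun x hx => ne_of_gt hx
    refine ge_of_tendsto (hslope.mono_left (nhdsWithin_mono u hsub)) ?_
    filter_upwards [Ioo_mem_nhdsGT hu_lt] with t ht
    have h1 : c < f t := hgt t ht.1 ht.2.le
    have h2 : (0:ℝ) < t - u := sub_pos.2 ht.1
    rw [slope_def_field]
    apply div_nonneg _ h2.le
    rw [hfu]; linarith
  linarith

lemma stay_ge_aux {f f' : ℝ → ℝ} {a b c : ℝ}
    (hd : ∀ t ∈ Icc a b, HasDerivAt f (f' t) t)
    (hpos : ∀ t ∈ Icc a b, f t = c → 0 < f' t)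
    (ha : c ≤ f a) : ∀ t ∈ Icc a b, c ≤ f t := by
  intro t ht
  have := stay_le_aux (f := fun s => -f s) (f' := fun s => -f' s) (c := -c)
    (fun s hs => (hd s hs).neg)
    (fun s hs h => by
      have h' : -f s = -c := h
      have hfs : f s = c := by linarith
      simpa using hpos s hs hfs)
    (by simpa using ha) t ht
  simpa using this

set_option maxHeartbeats 12000000 in
/-- Along a collision solution with `t* < ∞` and `ξ(t) → +∞` as `t → t*⁻`, `p` has
the expansion `p = m₁/2 − √ξ·(1 + O(1/ξ))`: there are `M > 0` and `t₁ ∈ [t₀, t*)` with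
`|p(t) − m₁(t)/2 + √(ξ(t))|·√(ξ(t)) ≤ M` on `[t₁, t*)`. -/
theorem p_asymptotic_expansion
    (t0 tstar : ℝ) (ht0 : t0 < tstar)
    (m1 m2 m3 xi p : ℝ → ℝ)
    (hm1 : ∀ t ∈ Set.Ico t0 tstar,
      HasDerivAt m1 (xi t * (-(m2 t)^2 + (m3 t)^2 + 2 * m2 t * m3 t * xi t)) t)
    (hm2 : ∀ t ∈ Set.Ico t0 tstar,
      HasDerivAt m2 (m1 t * m2 t * xi t - m3 t * p t - 2 * m1 t * m3 t * (xi t)^2) t)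
    (hm3 : ∀ t ∈ Set.Ico t0 tstar,
      HasDerivAt m3 (m2 t * p t - m1 t * m3 t * xi t) t)
    (hxi : ∀ t ∈ Set.Ico t0 tstar,
      HasDerivAt xi (-((xi t)^2 + 1) * (2 * p t - m1 t)) t)
    (hp : ∀ t ∈ Set.Ico t0 tstar,
      HasDerivAt p (-((xi t)^2 + 1) * (1 + m2 t * m3 t - 2 * (m3 t)^2 * xi t)) t)
    (hcoll : Tendsto xi (nhdsWithin tstar (Set.Iio tstar)) atTop) :
    ∃ M > (0 : ℝ), ∃ t1 ∈ Set.Ico t0 tstar,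
      ∀ t ∈ Set.Ico t1 tstar,
        |p t - m1 t / 2 + Real.sqrt (xi t)| * Real.sqrt (xi t) ≤ M := by
  classical
  -- constants
  obtain ⟨L0, hL0_def⟩ : ∃ x : ℝ, x = m1 t0^2 + m2 t0^2 + m3 t0^2 := ⟨_, rfl⟩
  obtain ⟨E0, hE0_def⟩ : ∃ x : ℝ,
    x = p t0^2 - m1 t0 * p t0 - xi t0 + m3 t0^2 * xi t0^2 - m2 t0 * m3 t0 * xi t0 := ⟨_, rfl⟩
  obtain ⟨B, hB_def⟩ : ∃ x : ℝ, x = |E0| + L0 := ⟨_, rfl⟩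
  obtain ⟨A, hA_def⟩ : ∃ x : ℝ, x = 1000 * (1 + L0 + B)^2 := ⟨_, rfl⟩
  have hL0 : 0 ≤ L0 := by rw [hL0_def]; positivity
  have hB0 : 0 ≤ B := by rw [hB_def]; positivity
  have hA512 : 512 ≤ A := by rw [hA_def]; nlinarith [sq_nonneg (L0 + B)]
  have hABle : B ≤ A := by rw [hA_def]; nlinarith [sq_nonneg (L0 + B), sq_nonneg B]
  have hA1000 : 1000 + 1000 * L0 + 1000 * B ≤ A := by
    rw [hA_def]; nlinarith [sq_nonneg (L0 + B)]
  have hA2 : (1 + L0)^2 / 2 + 3 * (1 + L0) ≤ A := by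
    rw [hA_def]; nlinarith [sq_nonneg (L0 + B), sq_nonneg L0, sq_nonneg (L0 - 1)]
  -- auxiliary functions
  obtain ⟨sf, hsf_def⟩ : ∃ x : ℝ → ℝ, x = fun τ => m1 τ / 2 - p τ := ⟨_, rfl⟩
  obtain ⟨vf, hvf_def⟩ : ∃ x : ℝ → ℝ, x = fun τ => m3 τ * xi τ - m2 τ / 2 := ⟨_, rfl⟩
  obtain ⟨sder, hsder_def⟩ : ∃ x : ℝ → ℝ, x = fun τ =>
    (xi τ^2 + 1) - 2 * xi τ * (vf τ)^2 + xi τ * (m3 τ)^2 / 2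
      + m2 τ * m3 τ - 2 * (m3 τ)^2 * xi τ := ⟨_, rfl⟩
  obtain ⟨vder, hvder_def⟩ : ∃ x : ℝ → ℝ, x = fun τ =>
    2 * sf τ * xi τ * vf τ + m3 τ * (3 * sf τ / 2 + m1 τ / 4) := ⟨_, rfl⟩
  obtain ⟨yder, hyder_def⟩ : ∃ x : ℝ → ℝ, x = fun τ => 2 * vf τ * vder τ := ⟨_, rfl⟩
  -- conservation of total angular momentum
  have hLconst : ∀ t ∈ Set.Ico t0 tstar, m1 t^2 + m2 t^2 + m3 t^2 = L0 := by
    intro t ht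
    have hsub : Icc t0 t ⊆ Set.Ico t0 tstar := fun τ hτ => ⟨hτ.1, lt_of_le_of_lt hτ.2 ht.2⟩
    have hc := const_of_deriv_aux (f := fun τ => m1 τ^2 + m2 τ^2 + m3 τ^2)
      (f' := fun τ => 0) ht.1 ?_ (fun τ _ => rfl)
    · rw [hL0_def]; simpa using hc
    · intro τ hτ
      have h1 := hm1 τ (hsub hτ); have h2 := hm2 τ (hsub hτ); have h3 := hm3 τ (hsub hτ)
      have hD := ((h1.pow 2).add (h2.pow 2)).add (h3.pow 2)
      refine hD.congr_deriv ?_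
      push_cast
      ring
  -- conservation of energy
  have hEconst : ∀ t ∈ Set.Ico t0 tstar,
      p t^2 - m1 t * p t - xi t + m3 t^2 * xi t^2 - m2 t * m3 t * xi t = E0 := by
    intro t ht
    have hsub : Icc t0 t ⊆ Set.Ico t0 tstar := fun τ hτ => ⟨hτ.1, lt_of_le_of_lt hτ.2 ht.2⟩
    have hc := const_of_deriv_aux
      (f := fun τ => p τ^2 - m1 τ * p τ - xi τ + m3 τ^2 * xi τ^2 - m2 τ * m3 τ * xi τ)
      (f' := fun τ => 0) ht.1 ?_ (fun τ _ => rfl)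
    · rw [hE0_def]; simpa using hc
    · intro τ hτ
      have h1 := hm1 τ (hsub hτ); have h2 := hm2 τ (hsub hτ); have h3 := hm3 τ (hsub hτ)
      have h4 := hxi τ (hsub hτ); have h5 := hp τ (hsub hτ)
      have hD := (((((h5.pow 2).sub (h1.mul h5)).sub h4).add
        ((h3.pow 2).mul (h4.pow 2))).sub ((h2.mul h3).mul h4))
      refine hD.congr_deriv ?_
      push_cast [Pi.pow_apply, Pi.mul_apply]
      ring
  -- pointwise bounds from conservation
  have hm1sq : ∀ t ∈ Set.Ico t0 tstar, m1 t^2 ≤ L0 := by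
    intro t ht; nlinarith [hLconst t ht, sq_nonneg (m2 t), sq_nonneg (m3 t)]
  have hm2sq : ∀ t ∈ Set.Ico t0 tstar, m2 t^2 ≤ L0 := by
    intro t ht; nlinarith [hLconst t ht, sq_nonneg (m1 t), sq_nonneg (m3 t)]
  have hm3sq : ∀ t ∈ Set.Ico t0 tstar, m3 t^2 ≤ L0 := by
    intro t ht; nlinarith [hLconst t ht, sq_nonneg (m1 t), sq_nonneg (m2 t)]
  -- the constraint s² + v² = ξ + K with |K| ≤ B
  have hcon : ∀ t ∈ Set.Ico t0 tstar,
      sf t^2 + vf t^2 = xi t + (E0 + m1 t^2/4 + m2 t^2/4) := by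
    intro t ht
    have hE := hEconst t ht
    simp only [hsf_def, hvf_def]
    linear_combination hE
  have hKlb : ∀ t ∈ Set.Ico t0 tstar, -B ≤ E0 + m1 t^2/4 + m2 t^2/4 := by
    intro t ht
    rw [hB_def]
    have := neg_abs_le E0
    nlinarith [sq_nonneg (m1 t), sq_nonneg (m2 t)]
  have hKub : ∀ t ∈ Set.Ico t0 tstar, E0 + m1 t^2/4 + m2 t^2/4 ≤ B := by
    intro t ht
    rw [hB_def]
    have := le_abs_self E0
    nlinarith [hm1sq t ht, hm2sq t ht]
  -- derivative statements
  have hsd : ∀ t ∈ Set.Ico t0 tstar, HasDerivAt sf (sder t) t := by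
    intro t ht
    have hD := ((hm1 t ht).div_const 2).sub (hp t ht)
    simp only [hsf_def, hsder_def, hvf_def]
    refine hD.congr_deriv ?_
    ring
  have hxid : ∀ t ∈ Set.Ico t0 tstar, HasDerivAt xi (2 * sf t * (xi t^2 + 1)) t := by
    intro t ht
    simp only [hsf_def]
    convert hxi t ht using 1
    ring
  have hvd : ∀ t ∈ Set.Ico t0 tstar, HasDerivAt vf (vder t) t := by
    intro t ht
    have hD := ((hm3 t ht).mul (hxi t ht)).sub ((hm2 t ht).div_const 2)
    simp only [hvf_def, hvder_def, hsf_def]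
    refine hD.congr_deriv ?_
    ring
  have hyd : ∀ t ∈ Set.Ico t0 tstar, HasDerivAt (fun τ => vf τ^2) (yder t) t := by
    intro t ht
    have hD := (hvd t ht).pow 2
    simp only [hyder_def]
    refine hD.congr_deriv ?_
    push_cast
    ring
  -- key differential inequalities
  have key1 : ∀ t ∈ Set.Ico t0 tstar, A ≤ xi t → sf t^2 ≤ xi t / 8 →
      sder t ≤ -(xi t^2) / 2 := by
    intro t ht hxA hs8
    have hxpos : (0:ℝ) < xi t := by linarith
    have hAx1 : 1000 + 1000 * L0 + 1000 * B ≤ xi t := le_trans hA1000 hxA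
    have hc := hcon t ht
    have hK := hKlb t ht
    have hv2' : xi t - B - xi t / 8 ≤ vf t^2 := by nlinarith
    have hmul : 2 * xi t * (xi t - B - xi t / 8) ≤ 2 * xi t * vf t^2 :=
      mul_le_mul_of_nonneg_left hv2' (by positivity)
    have hm2m3 : m2 t * m3 t ≤ L0 := by
      nlinarith [sq_nonneg (m2 t - m3 t), hm2sq t ht, hm3sq t ht]
    have hm3x : xi t * (m3 t)^2 / 2 ≤ xi t * L0 / 2 := by
      nlinarith [hm3sq t ht, hxpos.le, mul_le_mul_of_nonneg_left (hm3sq t ht) hxpos.le]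
    have h2m3x : (0:ℝ) ≤ 2 * (m3 t)^2 * xi t := by positivity
    have hx2 : xi t * (1000 + 1000 * L0 + 1000 * B) ≤ xi t * xi t :=
      mul_le_mul_of_nonneg_left hAx1 hxpos.le
    have hLx : L0 ≤ L0 * xi t := by
      nlinarith [mul_nonneg hL0 (by linarith : (0:ℝ) ≤ xi t - 1)]
    have hBx : B ≤ B * xi t := by
      nlinarith [mul_nonneg hB0 (by linarith : (0:ℝ) ≤ xi t - 1)]
    simp only [hsder_def]
    nlinarith [hmul, hm2m3, hm3x, h2m3x, hx2, hLx, hBx, hAx1]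
  have key2 : ∀ t ∈ Set.Ico t0 tstar, A ≤ xi t → sder t ≤ 2 * xi t^2 := by
    intro t ht hxA
    have hxpos : (0:ℝ) < xi t := by linarith
    have hAx1 : 1000 + 1000 * L0 + 1000 * B ≤ xi t := le_trans hA1000 hxA
    have hm2m3 : m2 t * m3 t ≤ L0 := by
      nlinarith [sq_nonneg (m2 t - m3 t), hm2sq t ht, hm3sq t ht]
    have hm3x : xi t * (m3 t)^2 / 2 ≤ xi t * L0 / 2 := by
      nlinarith [hm3sq t ht, hxpos.le, mul_le_mul_of_nonneg_left (hm3sq t ht) hxpos.le]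
    have h2m3x : (0:ℝ) ≤ 2 * (m3 t)^2 * xi t := by positivity
    have hv2 : (0:ℝ) ≤ 2 * xi t * vf t^2 := by positivity
    have hx2 : xi t * (1000 + 1000 * L0 + 1000 * B) ≤ xi t * xi t :=
      mul_le_mul_of_nonneg_left hAx1 hxpos.le
    have hLx : L0 ≤ L0 * xi t := by
      nlinarith [mul_nonneg hL0 (by linarith : (0:ℝ) ≤ xi t - 1)]
    simp only [hsder_def]
    nlinarith [hm2m3, hm3x, h2m3x, hv2, hx2, hLx, hAx1]
  have key3 : ∀ t ∈ Set.Ico t0 tstar, A ≤ xi t → 1 < sf t → 1 ≤ vf t^2 →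
      3 * sf t * xi t * vf t^2 ≤ yder t := by
    intro t ht hxA hs1 hy1
    have hxpos : (0:ℝ) < xi t := by linarith
    have hm3a : |m3 t| ≤ 1 + L0 := by
      linarith [sq_abs (m3 t), abs_nonneg (m3 t), hm3sq t ht, sq_nonneg (|m3 t| - 1)]
    have hm1a : |m1 t| ≤ 1 + L0 := by
      linarith [sq_abs (m1 t), abs_nonneg (m1 t), hm1sq t ht, sq_nonneg (|m1 t| - 1)]
    have hva : |vf t| ≤ vf t^2 := by
      linarith [sq_abs (vf t), abs_nonneg (vf t), sq_nonneg (|vf t| - 1), hy1]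
    have hPhi : |3 * sf t / 2 + m1 t / 4| ≤ 3 * sf t / 2 + (1 + L0) / 4 := by
      have h1 : |3 * sf t / 2 + m1 t / 4| ≤ |3 * sf t / 2| + |m1 t / 4| := abs_add_le _ _
      have h2 : |3 * sf t / 2| = 3 * sf t / 2 := abs_of_pos (by linarith)
      have h3 : |m1 t / 4| = |m1 t| / 4 := by rw [abs_div]; norm_num
      linarith
    have habs : |2 * vf t * (m3 t * (3 * sf t / 2 + m1 t / 4))|
        ≤ 2 * vf t^2 * ((1 + L0) * (3 * sf t / 2 + (1 + L0) / 4)) := by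
      rw [abs_mul, abs_mul, abs_mul]
      have h2 : |(2:ℝ)| = 2 := by norm_num
      rw [h2]
      have hn3 : (0:ℝ) ≤ |3 * sf t / 2 + m1 t / 4| := abs_nonneg _
      have hΦpos : (0:ℝ) ≤ 3 * sf t / 2 + (1 + L0) / 4 := by linarith
      have hm3pos : (0:ℝ) ≤ 1 + L0 := by linarith
      apply mul_le_mul
      · linarith [hva]
      · exact mul_le_mul hm3a hPhi hn3 hm3pos
      · positivity
      · positivity
    have hXlb : -(2 * vf t^2 * ((1 + L0) * (3 * sf t / 2 + (1 + L0) / 4)))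
        ≤ 2 * vf t * (m3 t * (3 * sf t / 2 + m1 t / 4)) := by
      have := neg_abs_le (2 * vf t * (m3 t * (3 * sf t / 2 + m1 t / 4)))
      linarith
    have hxc : (1 + L0)^2 / 2 + 3 * (1 + L0) ≤ xi t := le_trans hA2 hxA
    have hfac : 0 ≤ sf t * xi t - 3 * sf t * (1 + L0) - (1 + L0)^2 / 2 := by
      nlinarith [hxc, hs1, mul_le_mul_of_nonneg_left hxc (by linarith : (0:ℝ) ≤ sf t - 1)]
    have hvfac := mul_nonneg (sq_nonneg (vf t)) hfac
    simp only [hyder_def, hvder_def]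
    nlinarith [hXlb, hvfac]
  -- choose t1 with ξ ≥ A beyond t1
  have hpickA : ∃ t1, t0 ≤ t1 ∧ t1 < tstar ∧ ∀ t ∈ Set.Ico t1 tstar, A ≤ xi t := by
    have hev : {t | A < xi t} ∈ nhdsWithin tstar (Set.Iio tstar) :=
      hcoll.eventually (eventually_gt_atTop A)
    rw [mem_nhdsLT_iff_exists_Ioo_subset] at hev
    obtain ⟨l, hl, hsub⟩ := hev
    simp only [mem_Iio] at hl
    refine ⟨max t0 ((l + tstar)/2), le_max_left _ _, ?_, ?_⟩
    · apply max_lt ht0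
      linarith
    · intro t ht
      have h1 : (l + tstar)/2 ≤ t := le_trans (le_max_right _ _) ht.1
      have : t ∈ Ioo l tstar := ⟨by linarith, ht.2⟩
      exact (hsub this).le
  obtain ⟨t1, ht01, ht1star, hxiA⟩ := hpickA
  have hJI : Set.Ico t1 tstar ⊆ Set.Ico t0 tstar := fun τ hτ => ⟨le_trans ht01 hτ.1, hτ.2⟩
  -- "pick a later time with huge ξ"
  have pick : ∀ (R t2 : ℝ), t2 < tstar → ∃ t3, t2 ≤ t3 ∧ t3 < tstar ∧ R < xi t3 := by
    intro R t2 ht2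
    have hev : {t | R < xi t} ∈ nhdsWithin tstar (Set.Iio tstar) :=
      hcoll.eventually (eventually_gt_atTop R)
    rw [mem_nhdsLT_iff_exists_Ioo_subset] at hev
    obtain ⟨l, hl, hsub⟩ := hev
    simp only [mem_Iio] at hl
    have hmax : max l t2 < tstar := max_lt hl ht2
    refine ⟨(max l t2 + tstar)/2, ?_, by linarith, ?_⟩
    · have := le_max_right l t2
      linarith
    · have h1 := le_max_left l t2
      exact hsub ⟨by linarith, by linarith⟩
  -- Main Lemma 1 : s > 1 throughout [t1, t*)
  have main1 : ∀ t ∈ Set.Ico t1 tstar, 1 < sf t := by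
    by_contra hconclusion
    push_neg at hconclusion
    obtain ⟨t2, ht2, hs2⟩ := hconclusion
    have hIccJ : ∀ {b : ℝ}, b < tstar → Icc t2 b ⊆ Set.Ico t1 tstar := fun hb τ hτ =>
      ⟨le_trans ht2.1 hτ.1, lt_of_le_of_lt hτ.2 hb⟩
    -- invariance of s ≤ 1
    have inv : ∀ t ∈ Set.Ico t2 tstar, sf t ≤ 1 := by
      intro t ht
      refine stay_le_aux (a := t2) (b := t) (f' := sder) ?_ ?_ hs2 t ⟨ht.1, le_refl t⟩
      · intro τ hτ; exact hsd τ (hJI (hIccJ ht.2 hτ))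
      · intro τ hτ hfτ
        have hξ := hxiA τ (hIccJ ht.2 hτ)
        have hxpos : (0:ℝ) < xi τ := by linarith
        have h1 : sf τ^2 ≤ xi τ / 8 := by rw [hfτ]; nlinarith
        have hkey := key1 τ (hJI (hIccJ ht.2 hτ)) hξ h1
        nlinarith [mul_pos hxpos hxpos]
    -- s + ξ/8 is non-increasing
    have hanti : ∀ t ∈ Set.Ico t2 tstar, sf t + xi t / 8 ≤ sf t2 + xi t2 / 8 := by
      intro t ht
      refine anti_of_deriv_aux (f := fun τ => sf τ + xi τ / 8)
        (f' := fun τ => sder τ + 2 * sf τ * (xi τ^2 + 1) / 8) ht.1 ?_ ?_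
      · intro τ hτ
        exact (hsd τ (hJI (hIccJ ht.2 hτ))).add ((hxid τ (hJI (hIccJ ht.2 hτ))).div_const 8)
      · intro τ hτ
        have hξ := hxiA τ (hIccJ ht.2 hτ)
        have hxpos : (0:ℝ) < xi τ := by linarith
        have hx1 : (1:ℝ) ≤ xi τ := by linarith
        have hxx : xi τ * 1 ≤ xi τ * xi τ := mul_le_mul_of_nonneg_left hx1 hxpos.le
        have hsle : sf τ ≤ 1 := inv τ ⟨hτ.1, lt_of_le_of_lt hτ.2 ht.2⟩
        by_cases hc8 : -8 ≤ sf τ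
        · have h1 : sf τ^2 ≤ xi τ / 8 := by
            nlinarith [mul_nonneg (by linarith : (0:ℝ) ≤ sf τ + 8)
              (by linarith : (0:ℝ) ≤ 1 - sf τ)]
          have hkey := key1 τ (hJI (hIccJ ht.2 hτ)) hξ h1
          have hterm : 2 * sf τ * (xi τ^2 + 1) ≤ 2 * (xi τ^2 + 1) := by
            nlinarith [mul_nonneg (by linarith : (0:ℝ) ≤ 1 - sf τ)
              (by positivity : (0:ℝ) ≤ xi τ^2 + 1)]
          nlinarith
        · push_neg at hc8
          have hkey := key2 τ (hJI (hIccJ ht.2 hτ)) hξ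
          have hterm : 2 * sf τ * (xi τ^2 + 1) ≤ 2 * (-8) * (xi τ^2 + 1) := by
            nlinarith [mul_nonneg (by linarith : (0:ℝ) ≤ -8 - sf τ)
              (by positivity : (0:ℝ) ≤ xi τ^2 + 1)]
          nlinarith
    -- bound on ξ, then contradiction
    obtain ⟨t3, h23, h3star, hR⟩ :=
      pick (16 * |sf t2 + xi t2 / 8| + 512 * B + 1024) t2 ht2.2
    have ht3J : t3 ∈ Set.Ico t1 tstar := ⟨le_trans ht2.1 h23, h3star⟩
    have hc2 := hanti t3 ⟨h23, h3star⟩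
    have hcon3 := hcon t3 (hJI ht3J)
    have hsb : sf t3^2 ≤ xi t3 + B := by
      nlinarith [sq_nonneg (vf t3), hKub t3 (hJI ht3J)]
    have habs1 := le_abs_self (sf t2 + xi t2 / 8)
    have habs2 := abs_nonneg (sf t2 + xi t2 / 8)
    have hXpos : (0:ℝ) < xi t3 := by linarith
    have hs_neg : sf t3 ≤ -(xi t3) / 16 := by linarith
    have hsq : (xi t3)^2 / 256 ≤ sf t3^2 := by
      nlinarith [mul_nonneg (neg_nonneg.2 (by linarith : sf t3 + xi t3 / 16 ≤ 0))
        (neg_nonneg.2 (by linarith : sf t3 - xi t3 / 16 ≤ 0))]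
    have hXB : 512 * B + 1024 < xi t3 := by linarith
    have hXX : xi t3 * (512 * B + 1024) < xi t3 * xi t3 :=
      mul_lt_mul_of_pos_left hXB hXpos
    have hBX : B ≤ B * xi t3 := by
      nlinarith [mul_nonneg hB0 (by linarith : (0:ℝ) ≤ xi t3 - 1)]
    nlinarith
  -- Main Lemma 2 : v² < 1 throughout [t1, t*)
  have main2 : ∀ t ∈ Set.Ico t1 tstar, vf t^2 < 1 := by
    by_contra hconclusion
    push_neg at hconclusion
    obtain ⟨t2, ht2, hy2⟩ := hconclusion
    have hIccJ : ∀ {b : ℝ}, b < tstar → Icc t2 b ⊆ Set.Ico t1 tstar := fun hb τ hτ =>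
      ⟨le_trans ht2.1 hτ.1, lt_of_le_of_lt hτ.2 hb⟩
    -- invariance of v² ≥ 1
    have inv2 : ∀ t ∈ Set.Ico t2 tstar, 1 ≤ vf t^2 := by
      intro t ht
      refine stay_ge_aux (a := t2) (b := t) (f := fun τ => vf τ^2) (f' := yder) ?_ ?_ hy2 t ⟨ht.1, le_refl t⟩
      · intro τ hτ; exact hyd τ (hJI (hIccJ ht.2 hτ))
      · intro τ hτ hfτ
        have hτJ := hIccJ ht.2 hτ
        have hξ := hxiA τ hτJ
        have hxpos : (0:ℝ) < xi τ := by linarith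
        have hs1 := main1 τ hτJ
        have hfτ' : vf τ^2 = 1 := hfτ
        have hkey := key3 τ (hJI hτJ) hξ hs1 (le_of_eq hfτ'.symm)
        rw [hfτ'] at hkey
        nlinarith
    -- H = log v² - (3/4) log(ξ²+1) is non-decreasing
    have hmono2 : ∀ t ∈ Set.Ico t2 tstar,
        Real.log (vf t2^2) - 3/4 * Real.log (xi t2^2 + 1)
          ≤ Real.log (vf t^2) - 3/4 * Real.log (xi t^2 + 1) := by
      intro t ht
      refine mono_of_deriv_aux (f := fun τ => Real.log (vf τ^2) - 3/4 * Real.log (xi τ^2 + 1))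
        (f' := fun τ => yder τ / (vf τ^2)
          - 3/4 * ((2 * xi τ * (2 * sf τ * (xi τ^2 + 1))) / (xi τ^2 + 1))) ht.1 ?_ ?_
      · intro τ hτ
        have hτJ := hIccJ ht.2 hτ
        have hy1 : 1 ≤ vf τ^2 := inv2 τ ⟨hτ.1, lt_of_le_of_lt hτ.2 ht.2⟩
        have hyne : vf τ^2 ≠ 0 := by nlinarith
        have hxne : xi τ^2 + 1 ≠ 0 := by positivity
        have hpart1 : HasDerivAt (fun τ => Real.log (vf τ^2)) (yder τ / (vf τ^2)) τ :=
          (hyd τ (hJI hτJ)).log hyne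
        have hinner : HasDerivAt (fun τ => xi τ^2 + 1)
            (2 * xi τ * (2 * sf τ * (xi τ^2 + 1))) τ := by
          have hD := ((hxid τ (hJI hτJ)).pow 2).add_const 1
          refine hD.congr_deriv ?_
          push_cast
          ring
        have hpart2 : HasDerivAt (fun τ => 3/4 * Real.log (xi τ^2 + 1))
            (3/4 * ((2 * xi τ * (2 * sf τ * (xi τ^2 + 1))) / (xi τ^2 + 1))) τ :=
          (hinner.log hxne).const_mul (3/4)
        exact hpart1.sub hpart2
      · intro τ hτ
        have hτJ := hIccJ ht.2 hτ
        have hξ := hxiA τ hτJ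
        have hxpos : (0:ℝ) < xi τ := by linarith
        have hy1 : 1 ≤ vf τ^2 := inv2 τ ⟨hτ.1, lt_of_le_of_lt hτ.2 ht.2⟩
        have hy0 : (0:ℝ) < vf τ^2 := by linarith
        have hs1 := main1 τ hτJ
        have hkey := key3 τ (hJI hτJ) hξ hs1 hy1
        have hxne : (xi τ^2 + 1) ≠ 0 := by positivity
        have hterm : 3/4 * ((2 * xi τ * (2 * sf τ * (xi τ^2 + 1))) / (xi τ^2 + 1))
            = 3 * sf τ * xi τ := by
          field_simp
          ring
        rw [hterm, sub_nonneg, le_div_iff₀ hy0]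
        linarith [hkey]
    -- ξ is bounded beyond t2: contradiction
    have hboundxi : ∀ t ∈ Set.Ico t2 tstar,
        xi t ≤ Real.exp (2 * Real.log 2
          - 2 * (Real.log (vf t2^2) - 3/4 * Real.log (xi t2^2 + 1))) := by
      intro t ht
      have htJ : t ∈ Set.Ico t1 tstar := ⟨le_trans ht2.1 ht.1, ht.2⟩
      have hξ := hxiA t htJ
      have hxpos : (0:ℝ) < xi t := by linarith
      have hy1 : 1 ≤ vf t^2 := inv2 t ht
      have hyub : vf t^2 ≤ xi t + B := by
        nlinarith [hcon t (hJI htJ), sq_nonneg (sf t), hKub t (hJI htJ)]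
      have hyub2 : vf t^2 ≤ 2 * xi t := by linarith
      have hlog1 : Real.log (vf t^2) ≤ Real.log (2 * xi t) :=
        Real.log_le_log (by linarith) hyub2
      have hlog2 : Real.log (xi t^2) ≤ Real.log (xi t^2 + 1) :=
        Real.log_le_log (by positivity) (by linarith)
      have hlogmul : Real.log (2 * xi t) = Real.log 2 + Real.log (xi t) :=
        Real.log_mul (by norm_num) (ne_of_gt hxpos)
      have hlogpow : Real.log (xi t^2) = 2 * Real.log (xi t) := by
        rw [sq, Real.log_mul (ne_of_gt hxpos) (ne_of_gt hxpos)]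
        ring
      have hm := hmono2 t ht
      have hlogxi : Real.log (xi t) ≤ 2 * Real.log 2
          - 2 * (Real.log (vf t2^2) - 3/4 * Real.log (xi t2^2 + 1)) := by
        linarith [hm, hlog1, hlog2, hlogmul, hlogpow]
      calc xi t = Real.exp (Real.log (xi t)) := (Real.exp_log hxpos).symm
        _ ≤ _ := Real.exp_le_exp.2 hlogxi
    obtain ⟨t3, h23, h3star, hR⟩ := pick (Real.exp (2 * Real.log 2
      - 2 * (Real.log (vf t2^2) - 3/4 * Real.log (xi t2^2 + 1)))) t2 ht2.2
    exact absurd (hboundxi t3 ⟨h23, h3star⟩) (not_le.2 hR)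
  -- conclusion
  refine ⟨B + 2, by linarith, t1, ⟨ht01, ht1star⟩, ?_⟩
  intro t ht
  have htI := hJI ht
  have hξ := hxiA t ht
  have hxpos : (0:ℝ) < xi t := by linarith
  have hs1 := main1 t ht
  have hv1 := main2 t ht
  have hc := hcon t htI
  have hKl := hKlb t htI
  have hKu := hKub t htI
  have hsq_lb : xi t - sf t^2 ≤ B + 1 := by nlinarith [sq_nonneg (vf t)]
  have hsq_ub : -(B + 1) ≤ xi t - sf t^2 := by nlinarith [sq_nonneg (vf t)]
  have hsqrt : Real.sqrt (xi t) ^ 2 = xi t := Real.sq_sqrt hxpos.le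
  have hsqrt_nonneg : 0 ≤ Real.sqrt (xi t) := Real.sqrt_nonneg _
  have hrw : p t - m1 t / 2 + Real.sqrt (xi t) = Real.sqrt (xi t) - sf t := by
    simp only [hsf_def]
    ring
  rw [hrw]
  have step1 : |Real.sqrt (xi t) - sf t| * Real.sqrt (xi t)
      ≤ |Real.sqrt (xi t) - sf t| * (Real.sqrt (xi t) + sf t) := by
    apply mul_le_mul_of_nonneg_left _ (abs_nonneg _)
    linarith
  have step2 : |Real.sqrt (xi t) - sf t| * (Real.sqrt (xi t) + sf t)
      = |xi t - sf t^2| := by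
    rw [← abs_of_pos (by linarith : (0:ℝ) < Real.sqrt (xi t) + sf t), ← abs_mul]
    congr 1
    nlinarith [hsqrt]
  have step3 : |xi t - sf t^2| ≤ B + 1 := abs_le.2 ⟨by linarith, by linarith⟩
  calc |Real.sqrt (xi t) - sf t| * Real.sqrt (xi t)
      ≤ |Real.sqrt (xi t) - sf t| * (Real.sqrt (xi t) + sf t) := step1
    _ = |xi t - sf t^2| := step2
    _ ≤ B + 1 := step3
    _ ≤ B + 2 := by linarith
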